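/- arXiv:1203.5202 — 2 statements merged into one kernel-verified Lean document; each statement's English description precedes it below -/
import Mathlib

section
/- Let μ be a probability measure on ℕ = {1,2,…} with μ({1}) > 0, and suppose μ ∈ Γ_α with α ∈ (1/2,1). Then for every population size N ≥ 2, the time τ to the most recent common ancestor of two distinct individuals of the same generation has infinite expectation: E[τ] = ∞, where τ = min{n ≥ 1 : R_n = R'_n = 1 and U_n = U'_n}. -/
open MeasureTheory ProbabilityTheory Filter
open scoped ENNReal

/-- `L : ℕ → (0,∞)` is slowly varying: for every `c > 0`, `L(⌊cn⌋)/L(n) → 1`. -/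
def SlowlyVarying (L : ℕ → ℝ) : Prop :=
  (∀ n, 0 < L n) ∧ ∀ c : ℝ, 0 < c → Tendsto (fun n : ℕ => L ⌊c * (n : ℝ)⌋₊ / L n) atTop (nhds 1)

/-- The tail `μ({n, n+1, …})` of the probability weights `w`. -/
noncomputable def tailSum (w : ℕ → ℝ) (n : ℕ) : ℝ := ∑' k : ℕ, if n ≤ k then w k else 0


lemma summable_ite (w : ℕ → ℝ) (hwnn : ∀ k, 0 ≤ w k) (hws : Summable w) (n : ℕ) :
    Summable fun k => if n ≤ k then w k else 0 := by
  refine Summable.of_nonneg_of_le (fun k => ?_) (fun k => ?_) hws <;> split_ifs <;>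
    simp [hwnn _]

lemma tailSum_antitone (w : ℕ → ℝ) (hwnn : ∀ k, 0 ≤ w k) (hws : Summable w) :
    Antitone (tailSum w) := by
  intro m n h
  refine Summable.tsum_le_tsum (fun k => ?_) (summable_ite w hwnn hws n) (summable_ite w hwnn hws m)
  split_ifs with h1 h2 h2
  · exact le_refl _
  · exact absurd (h.trans h1) h2
  · exact hwnn k
  · exact le_refl _

lemma not_summable_tailSum (w : ℕ → ℝ) (hwnn : ∀ k, 0 ≤ w k) (hws : Summable w)
    (α : ℝ) (hα0 : 0 < α) (hα : α < 1) (L : ℕ → ℝ) (hL : SlowlyVarying L)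
    (htail : ∀ n : ℕ, 1 ≤ n → tailSum w n = (n : ℝ) ^ (-α) * L n) :
    ¬ Summable (tailSum w) := by
  intro hsum
  set β : ℝ := (α + 1) / 2 with hβ
  have hαβ : α < β := by rw [hβ]; linarith
  have hβ1 : β < 1 := by rw [hβ]; linarith
  have hβ0 : 0 < β := by rw [hβ]; linarith
  -- ratio of L at 2n and n tends to 1
  have hrat : Tendsto (fun n : ℕ => L (2 * n) / L n) atTop (nhds 1) := by
    have := hL.2 2 two_pos
    refine this.congr (fun n => ?_)
    congr 2
    rw [show (2 : ℝ) * (n : ℝ) = ((2 * n : ℕ) : ℝ) by push_cast; ring, Nat.floor_natCast]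
  have h2αβ : (2 : ℝ) ^ (α - β) < 1 := by
    apply Real.rpow_lt_one_of_one_lt_of_neg one_lt_two; linarith
  have hev : ∀ᶠ n : ℕ in atTop, (2 : ℝ) ^ (α - β) ≤ L (2 * n) / L n :=
    hrat.eventually (eventually_ge_nhds h2αβ)
  obtain ⟨M, hM⟩ := eventually_atTop.mp hev
  -- the stepping lemma
  have hstep : ∀ m : ℕ, 1 ≤ m → M ≤ m →
      (2 : ℝ) ^ (-β) * tailSum w m ≤ tailSum w (2 * m) := by
    intro m hm1 hmM
    have hLm : 0 < L m := hL.1 m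
    have h1 : (2 : ℝ) ^ (α - β) * L m ≤ L (2 * m) := by
      have := hM m hmM
      rw [le_div_iff₀ hLm] at this
      linarith
    have hm2 : (1 : ℕ) ≤ 2 * m := by omega
    rw [htail m hm1, htail (2 * m) hm2]
    have hcast : ((2 * m : ℕ) : ℝ) = 2 * (m : ℝ) := by push_cast; ring
    rw [hcast, Real.mul_rpow (by norm_num) (Nat.cast_nonneg m)]
    have hmpos : (0 : ℝ) < (m : ℝ) ^ (-α) := Real.rpow_pos_of_pos (by exact_mod_cast hm1) _
    have hb : (2:ℝ) ^ (-α) * (2:ℝ) ^ (α - β) = (2:ℝ) ^ (-β) := by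
      rw [← Real.rpow_add two_pos]; ring_nf
    calc (2:ℝ) ^ (-β) * ((m:ℝ) ^ (-α) * L m)
        = (2:ℝ) ^ (-α) * ((m:ℝ) ^ (-α) * ((2:ℝ) ^ (α - β) * L m)) := by
          rw [← hb]; ring
      _ ≤ (2:ℝ) ^ (-α) * ((m:ℝ) ^ (-α) * L (2 * m)) := by
          apply mul_le_mul_of_nonneg_left _ (Real.rpow_nonneg (by norm_num) _)
          exact mul_le_mul_of_nonneg_left h1 hmpos.le
      _ = (2:ℝ) ^ (-α) * (m:ℝ) ^ (-α) * L (2 * m) := by ring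
  -- iterate along powers of two starting at 2^J with 2^J ≥ max M 1
  obtain ⟨J, hJ⟩ : ∃ J : ℕ, max M 1 ≤ 2 ^ J := ⟨max M 1, (Nat.lt_two_pow_self (n := max M 1)).le⟩
  have hJ1 : (1 : ℕ) ≤ 2 ^ J := le_trans (le_max_right _ _) hJ
  have hJM : M ≤ 2 ^ J := le_trans (le_max_left _ _) hJ
  set q : ℝ := (2 : ℝ) ^ (-β) with hq
  have hqpos : 0 < q := Real.rpow_pos_of_pos two_pos _
  have hTpos : 0 < tailSum w (2 ^ J) := by
    rw [htail _ hJ1]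
    exact mul_pos (Real.rpow_pos_of_pos (by exact_mod_cast hJ1) _) (hL.1 _)
  have hiter : ∀ j : ℕ, q ^ j * tailSum w (2 ^ J) ≤ tailSum w (2 ^ (J + j)) := by
    intro j
    induction j with
    | zero => simp
    | succ j ih =>
      have h1 : (1:ℕ) ≤ 2 ^ (J + j) := Nat.one_le_two_pow
      have hM' : M ≤ 2 ^ (J + j) := le_trans hJM (Nat.pow_le_pow_right (by norm_num) (by omega))
      have := hstep (2 ^ (J + j)) h1 hM'
      have h2 : q * (q ^ j * tailSum w (2 ^ J)) ≤ q * tailSum w (2 ^ (J + j)) :=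
        mul_le_mul_of_nonneg_left ih hqpos.le
      calc q ^ (j + 1) * tailSum w (2 ^ J) = q * (q ^ j * tailSum w (2 ^ J)) := by ring
        _ ≤ q * tailSum w (2 ^ (J + j)) := h2
        _ ≤ tailSum w (2 * 2 ^ (J + j)) := this
        _ = tailSum w (2 ^ (J + (j + 1))) := by rw [← pow_succ']; ring_nf
  -- block sums are bounded below by a positive constant
  set C : ℝ := q * tailSum w (2 ^ J) * 2 ^ J with hC
  have hCpos : 0 < C := by positivity
  have hblock : ∀ j : ℕ, C ≤ ∑ n ∈ Finset.Ico (2 ^ (J + j)) (2 ^ (J + j + 1)), tailSum w n := by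
    intro j
    have hanti := tailSum_antitone w hwnn hws
    have hlow : ∀ n ∈ Finset.Ico (2 ^ (J + j)) (2 ^ (J + j + 1)),
        tailSum w (2 ^ (J + j + 1)) ≤ tailSum w n := by
      intro n hn
      exact hanti (Finset.mem_Ico.mp hn).2.le
    have hcard : (Finset.Ico (2 ^ (J + j)) (2 ^ (J + j + 1))).card = 2 ^ (J + j) := by
      rw [Nat.card_Ico]; rw [pow_succ]; omega
    calc C = q * tailSum w (2 ^ J) * 2 ^ J := rfl
      _ = q * tailSum w (2 ^ J) * 2 ^ J * 1 := by ring
      _ ≤ q * tailSum w (2 ^ J) * 2 ^ J * (2 * q) ^ j := by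
          have h2q : (1:ℝ) ≤ 2 * q := by
            have heq : (2:ℝ) ^ ((1:ℝ) - β) = 2 * q := by
              rw [hq, show (1:ℝ) - β = 1 + (-β) by ring, Real.rpow_add two_pos,
                Real.rpow_one]
            rw [← heq]
            calc (1:ℝ) = (2:ℝ) ^ (0:ℝ) := by simp
              _ ≤ (2:ℝ) ^ ((1:ℝ) - β) := Real.rpow_le_rpow_of_exponent_le one_le_two (by linarith)
          exact mul_le_mul_of_nonneg_left (one_le_pow₀ h2q) (by positivity)
      _ = q ^ (j + 1) * tailSum w (2 ^ J) * 2 ^ (J + j) := by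
          rw [pow_add, mul_pow, pow_succ]; ring
      _ ≤ tailSum w (2 ^ (J + (j + 1))) * 2 ^ (J + j) := by
          apply mul_le_mul_of_nonneg_right (hiter (j + 1)) (by positivity)
      _ ≤ ∑ n ∈ Finset.Ico (2 ^ (J + j)) (2 ^ (J + j + 1)), tailSum w n := by
          have := Finset.card_nsmul_le_sum (Finset.Ico (2 ^ (J + j)) (2 ^ (J + j + 1)))
            (tailSum w) (tailSum w (2 ^ (J + j + 1))) hlow
          rw [hcard] at this
          rw [show J + (j + 1) = J + j + 1 by ring]
          calc tailSum w (2 ^ (J+j+1)) * 2 ^ (J+j)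
              = (2 ^ (J+j)) • tailSum w (2 ^ (J+j+1)) := by
                rw [nsmul_eq_mul]; push_cast; ring
            _ ≤ _ := this
  -- contradiction with summability via the vanishing criterion
  obtain ⟨s, hs⟩ := summable_iff_vanishing.mp hsum (Set.Iio C) (Iio_mem_nhds hCpos)
  set j : ℕ := s.sup id with hj
  have hdisj : Disjoint (Finset.Ico (2 ^ (J + j)) (2 ^ (J + j + 1))) s := by
    rw [Finset.disjoint_left]
    intro a ha has
    have h1 : 2 ^ (J + j) ≤ a := (Finset.mem_Ico.mp ha).1
    have h2 : a ≤ j := Finset.le_sup (f := id) has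
    have h3 : j < 2 ^ (J + j) := lt_of_lt_of_le (Nat.lt_two_pow_self (n := j))
      (Nat.pow_le_pow_right (by norm_num) (by omega))
    omega
  have := hs _ hdisj
  have hlt : ∑ n ∈ Finset.Ico (2 ^ (J + j)) (2 ^ (J + j + 1)), tailSum w n < C := this
  exact absurd (hblock j) (not_le.mpr hlt)


lemma tailSum_nonneg (w : ℕ → ℝ) (hwnn : ∀ k, 0 ≤ w k) (n : ℕ) : 0 ≤ tailSum w n :=
  tsum_nonneg fun k => by split_ifs <;> simp [hwnn _]

section Main
variable {Ω : Type*} [MeasurableSpace Ω] (P : Measure Ω) [IsProbabilityMeasure P]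

omit [IsProbabilityMeasure P] in
lemma lintegral_nat_eq_tsum (f : Ω → ℕ) (hf : Measurable f) :
    ∫⁻ ω, (f ω : ℝ≥0∞) ∂P = ∑' n : ℕ, P {ω | n < f ω} := by
  have hpt : ∀ ω, (f ω : ℝ≥0∞) =
      ∑' n : ℕ, Set.indicator {ω' | n < f ω'} (fun _ => (1 : ℝ≥0∞)) ω := by
    intro ω
    have h1 : ∀ n : ℕ, Set.indicator {ω' | n < f ω'} (fun _ => (1 : ℝ≥0∞)) ω
        = if n < f ω then 1 else 0 := by
      intro n; by_cases h : n < f ω <;> simp [Set.indicator, h]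
    simp only [h1]
    rw [tsum_eq_sum (s := Finset.range (f ω))
      (fun b hb => by simp [Finset.mem_range] at hb; simp [Nat.not_lt.mpr hb])]
    rw [Finset.sum_congr rfl (fun n hn => if_pos (Finset.mem_range.mp hn))]
    simp
  calc ∫⁻ ω, (f ω : ℝ≥0∞) ∂P
      = ∫⁻ ω, ∑' n : ℕ, Set.indicator {ω' | n < f ω'} (fun _ => (1:ℝ≥0∞)) ω ∂P := by
        exact lintegral_congr hpt
    _ = ∑' n : ℕ, ∫⁻ ω, Set.indicator {ω' | n < f ω'} (fun _ => (1:ℝ≥0∞)) ω ∂P := by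
        refine lintegral_tsum (fun n => ?_)
        exact ((measurable_const.indicator (hf measurableSet_Ioi)).aemeasurable)
    _ = ∑' n : ℕ, P {ω | n < f ω} := by
        refine tsum_congr (fun n => ?_)
        exact lintegral_indicator_one (hf measurableSet_Ioi)

lemma meas_lt_eq_tail (w : ℕ → ℝ) (hwnn : ∀ k, 0 ≤ w k) (hws : Summable w)
    (f : Ω → ℕ) (hf : Measurable f) (hlaw : ∀ k, P {ω | f ω = k} = ENNReal.ofReal (w k))
    (n : ℕ) : P {ω | n < f ω} = ENNReal.ofReal (tailSum w (n + 1)) := by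
  classical
  have hdecomp : {ω | n < f ω} = ⋃ k, (if n < k then f ⁻¹' {k} else ∅) := by
    ext ω
    simp only [Set.mem_iUnion, Set.mem_setOf_eq]
    constructor
    · intro h; exact ⟨f ω, by simp [h]⟩
    · rintro ⟨k, hk⟩
      split_ifs at hk with h
      · rw [Set.mem_preimage, Set.mem_singleton_iff] at hk; omega
      · exact absurd hk (Set.notMem_empty ω)
  have hmeasset : ∀ k : ℕ, MeasurableSet (if n < k then f ⁻¹' {k} else (∅ : Set Ω)) := by
    intro k; split_ifs
    · exact hf (measurableSet_singleton k)
    · exact MeasurableSet.empty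
  have hdisj : Pairwise (Function.onFun Disjoint
      fun k => (if n < k then f ⁻¹' {k} else (∅ : Set Ω))) := by
    intro i j hij
    simp only [Function.onFun]
    split_ifs with h1 h2 h2 <;> try simp
    rw [Set.disjoint_left]
    intro a ha hb
    rw [Set.mem_preimage, Set.mem_singleton_iff] at ha hb
    exact hij (ha ▸ hb ▸ rfl)
  rw [hdecomp, measure_iUnion hdisj hmeasset]
  have h1 : ∀ k : ℕ, P (if n < k then f ⁻¹' {k} else ∅)
      = if n + 1 ≤ k then ENNReal.ofReal (w k) else 0 := by
    intro k
    by_cases h : n < k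
    · rw [if_pos h, if_pos (show n + 1 ≤ k by omega)]
      have := hlaw k
      simpa [Set.preimage, Set.mem_singleton_iff] using this
    · rw [if_neg h, if_neg (show ¬ n + 1 ≤ k by omega), measure_empty]
  rw [tsum_congr h1]
  rw [tailSum, ENNReal.ofReal_tsum_of_nonneg (fun k => by split_ifs <;> simp [hwnn _])]
  · refine tsum_congr (fun k => ?_)
    split_ifs <;> simp
  · refine Summable.of_nonneg_of_le (fun k => ?_) (fun k => ?_) hws <;> split_ifs <;>
      simp [hwnn _]

end Main

/-- if `μ ∈ Γ_α` with `α ∈ (1/2,1)`, then for every `N ≥ 2` the time `τ` to the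
most recent common ancestor of two individuals of the same generation (the least `n ≥ 1` at which
both renewal processes have a renewal and the uniform labels agree, `∞` if there is none) has
infinite expectation. -/
theorem expected_tmrca_eq_top_of_alpha_in_half_one
    -- the seed bank age distribution μ, given by its weights w on ℕ, supported on {1,2,…}
    (w : ℕ → ℝ) (hw0 : w 0 = 0) (hwnn : ∀ k, 0 ≤ w k) (hwsum : HasSum w 1) (hw1 : 0 < w 1)
    -- μ ∈ Γ_α with α ∈ (1/2,1)
    (α : ℝ) (hα0 : 1 / 2 < α) (hα : α < 1)
    (L : ℕ → ℝ) (hL : SlowlyVarying L)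
    (htail : ∀ n : ℕ, 1 ≤ n → tailSum w n = (n : ℝ) ^ (-α) * L n)
    -- the population size
    (N : ℕ) (hN : 2 ≤ N)
    -- the two-lineage ancestral model
    {Ω : Type*} [MeasurableSpace Ω] (P : Measure Ω) [IsProbabilityMeasure P]
    (η η' U U' : ℕ → Ω → ℕ)
    (hmeas : ∀ i : Fin 4 × ℕ, Measurable (![η, η', U, U'] i.1 i.2))
    (hlawη : ∀ l k : ℕ, P {ω | η l ω = k} = ENNReal.ofReal (w k))
    (hlawη' : ∀ l k : ℕ, P {ω | η' l ω = k} = ENNReal.ofReal (w k))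
    (hlawU : ∀ n j : ℕ, P {ω | U n ω = j} = if 1 ≤ j ∧ j ≤ N then (N : ℝ≥0∞)⁻¹ else 0)
    (hlawU' : ∀ n j : ℕ, P {ω | U' n ω = j} = if 1 ≤ j ∧ j ≤ N then (N : ℝ≥0∞)⁻¹ else 0)
    (hindep : iIndepFun
      (fun i : Fin 4 × ℕ => ![η, η', U, U'] i.1 i.2) P) :
    -- the expected time to the most recent common ancestor is infinite
    ∫⁻ ω, sInf {t : ℝ≥0∞ | ∃ n : ℕ, t = n ∧ 1 ≤ n ∧
        (∃ k : ℕ, ∑ l ∈ Finset.range k, η l ω = n) ∧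
        (∃ k : ℕ, ∑ l ∈ Finset.range k, η' l ω = n) ∧ U n ω = U' n ω} ∂P = ⊤ := by
  classical
  rw [eq_top_iff]
  have hη0 : Measurable (η 0) := by
    have := hmeas (⟨0, 0⟩ : Fin 4 × ℕ)
    simpa using this
  have hws : Summable w := hwsum.summable
  have key : ∫⁻ ω, (η 0 ω : ℝ≥0∞) ∂P = ⊤ := by
    rw [lintegral_nat_eq_tsum P (η 0) hη0]
    rw [tsum_congr (fun n => meas_lt_eq_tail P w hwnn hws (η 0) hη0 (hlawη 0) n)]
    have hns : ¬ Summable (fun n => tailSum w (n + 1)) := by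
      rw [summable_nat_add_iff]
      exact not_summable_tailSum w hwnn hws α (by linarith) hα L hL htail
    have hfun : (fun n : ℕ => ENNReal.ofReal (tailSum w (n + 1)))
        = fun n : ℕ => (((tailSum w (n + 1)).toNNReal) : ℝ≥0∞) := rfl
    rw [hfun, ENNReal.tsum_coe_eq_top_iff_not_summable_coe]
    intro hs
    apply hns
    refine hs.congr (fun n => ?_)
    exact Real.coe_toNNReal _ (tailSum_nonneg w hwnn _)
  refine le_trans (le_of_eq key.symm) (lintegral_mono fun ω => le_sInf ?_)
  rintro t ⟨n, rfl, hn1, ⟨k, hk⟩, -, -⟩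
  have hk0 : 0 < k := by
    rcases Nat.eq_zero_or_pos k with rfl | h
    · simp at hk; omega
    · exact h
  have hle : η 0 ω ≤ n := by
    rw [← hk]
    exact Finset.single_le_sum (f := fun l => η l ω) (fun _ _ => Nat.zero_le _)
      (Finset.mem_range.mpr hk0)
  exact_mod_cast Nat.cast_le.mpr hle
end

section
/- Let μ be a probability measure on ℕ = {1,2,…} with μ({1}) > 0. For every n there is a constant c(n) < ∞, depending only on n, such that for all N > n and every configuration x ∈ S_n, one step of the seed-bank ancestral dynamics from x satisfies P(at least two mergers) ≤ c(n)/N². -/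
open MeasureTheory ProbabilityTheory Filter
open scoped ENNReal

/-- The discrete measure on `ℕ` with weights `f`. -/
noncomputable def measureOfWeights (f : ℕ → ℝ) : Measure ℕ :=
  Measure.sum (fun k => ENNReal.ofReal (f k) • Measure.dirac k)

/-- The uniform distribution on the `N` sections, modelled by `Fin N`. -/
noncomputable def unifFin (N : ℕ) : Measure (Fin N) := (N : ℝ≥0∞)⁻¹ • Measure.count

/-- Given a configuration `x : ℕ → ℕ` (with `x j` balls in urn `j`, urns `j ≥ 1`) and a
relocation sample `ξ` assigning to each of the `l = x 1` balls of urn 1 a displacement and a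
section, the number of balls after one step of the seed-bank ancestral dynamics: after the
step, urn `j ≥ 1` contains the `x (j+1)` previously present balls (occupying the first
`x (j+1)` sections) together with the relocated balls `b` with displacement `j` placed at
their sections, and balls occupying the same (urn, section) pair merge into one. -/
noncomputable def ballsAfter (N : ℕ) (x : ℕ → ℕ) {l : ℕ} (ξ : Fin l → ℕ × Fin N) : ℕ :=
  Set.ncard {q : ℕ × Fin N | 1 ≤ q.1 ∧ (((q.2 : ℕ) < x (q.1 + 1)) ∨ ∃ b : Fin l, ξ b = q)}

section Aux

open Function
open scoped NNReal


lemma measureOfWeights_singleton (w : ℕ → ℝ) (k : ℕ) :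
    measureOfWeights w {k} = ENNReal.ofReal (w k) := by
  rw [measureOfWeights, Measure.sum_apply _ (measurableSet_singleton k)]
  rw [tsum_eq_single k]
  · simp
  · intro j hj
    rw [Measure.smul_apply, Measure.dirac_apply' _ (measurableSet_singleton k),
      Set.indicator_of_notMem (by simpa using hj)]
    simp

lemma measureOfWeights_univ (w : ℕ → ℝ) (hwnn : ∀ k, 0 ≤ w k) (hwsum : HasSum w 1) :
    measureOfWeights w Set.univ = 1 := by
  rw [measureOfWeights, Measure.sum_apply _ MeasurableSet.univ]
  simp only [Measure.smul_apply, Measure.dirac_apply_of_mem (Set.mem_univ _), smul_eq_mul, mul_one]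
  rw [← ENNReal.ofReal_tsum_of_nonneg hwnn hwsum.summable, hwsum.tsum_eq]
  simp

lemma unifFin_prob (N : ℕ) (hN : 0 < N) : IsProbabilityMeasure (unifFin N) := by
  constructor
  rw [unifFin, Measure.smul_apply, Measure.count_apply_finite _ Set.finite_univ]
  simp only [Set.ncard_univ, Nat.card_eq_fintype_card, Fintype.card_fin, smul_eq_mul,
    Set.Finite.toFinset_univ, Finset.card_univ]
  rw [ENNReal.inv_mul_cancel] <;> simp [hN.ne']

lemma unifFin_finset (N : ℕ) (s : Finset (Fin N)) :
    unifFin N ↑s = (N : ℝ≥0∞)⁻¹ * s.card := by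
  rw [unifFin, Measure.smul_apply, Measure.count_apply_finset]; rfl


lemma lmarginal_const' {δ : Type*} [DecidableEq δ] {π : δ → Type*} [∀ i, MeasurableSpace (π i)]
    (μ : ∀ i, Measure (π i)) [∀ i, IsProbabilityMeasure (μ i)] (s : Finset δ) (c : ℝ≥0∞) :
    MeasureTheory.lmarginal μ s (fun _ => c) = fun _ => c := by
  induction s using Finset.cons_induction with
  | empty => simp
  | cons i s hi ih =>
    ext x
    rw [Finset.cons_eq_insert, MeasureTheory.lmarginal_insert _ measurable_const hi, ih]
    simp

lemma pair_bound {l N : ℕ} (μ : Measure (Fin N)) [IsProbabilityMeasure μ]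
    {i j : Fin l} (hij : j < i)
    (F G : (Fin l → Fin N) → Set (Fin N))
    (hF : ∀ σ t, F (update σ i t) = F σ)
    (hG : ∀ σ (k : Fin l), j ≤ k → ∀ t, G (update σ k t) = G σ)
    {ε : ℝ≥0∞} (hFε : ∀ σ, μ (F σ) ≤ ε) (hGε : ∀ σ, μ (G σ) ≤ ε) :
    Measure.pi (fun _ : Fin l => μ) {σ | σ i ∈ F σ ∧ σ j ∈ G σ} ≤ ε ^ 2 := by
  classical
  set T : Set (Fin l → Fin N) := {σ | σ i ∈ F σ ∧ σ j ∈ G σ} with hT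
  set f : (Fin l → Fin N) → ℝ≥0∞ := T.indicator (fun _ => (1:ℝ≥0∞)) with hfdef
  have hone : (fun _ : Fin l → Fin N => (1:ℝ≥0∞)) = (1 : (Fin l → Fin N) → ℝ≥0∞) := rfl
  have hone2 : (fun _ : Fin N => (1:ℝ≥0∞)) = (1 : Fin N → ℝ≥0∞) := rfl
  have hTm : MeasurableSet T := (Set.to_countable T).measurableSet
  have hfm : Measurable f := measurable_of_countable _
  have hNne : Nonempty (Fin N) := by
    rcases isEmpty_or_nonempty (Fin N) with h | h
    · exfalso
      have h1 : μ Set.univ = 1 := measure_univ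
      rw [Set.univ_eq_empty_iff.mpr h, measure_empty] at h1
      exact zero_ne_one h1
    · exact h
  obtain ⟨t₀⟩ := hNne
  have key : Measure.pi (fun _ : Fin l => μ) T
      = ∫⁻ σ, f σ ∂(Measure.pi (fun _ : Fin l => μ)) := by
    rw [hfdef, hone, lintegral_indicator_one hTm]
  rw [key, MeasureTheory.lintegral_eq_lmarginal_univ (fun _ => t₀)]
  have hsplit : (Finset.univ : Finset (Fin l)) = (Finset.univ \ {i, j}) ∪ {i, j} := by
    rw [Finset.sdiff_union_self_eq_union]; simp
  rw [hsplit, MeasureTheory.lmarginal_union _ _ hfm (Finset.sdiff_disjoint)]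
  have inner : ∀ y, (∫⋯∫⁻_{i, j}, f ∂fun _ => μ) y ≤ ε ^ 2 := by
    intro y
    have hji : i ≠ j := hij.ne'
    have hpair : ({i, j} : Finset (Fin l)) = insert j {i} := by rw [Finset.pair_comm]
    rw [hpair, MeasureTheory.lmarginal_insert _ hfm
      (by simp [hji.symm] : j ∉ ({i} : Finset (Fin l)))]
    have step1 : ∀ tj, (∫⋯∫⁻_{i}, f ∂fun _ => μ)
        (update y j tj) ≤ (G y).indicator (fun _ => (1:ℝ≥0∞)) tj * ε := by
      intro tj
      rw [MeasureTheory.lmarginal_singleton]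
      calc ∫⁻ ti, f (update (update y j tj) i ti) ∂μ
          ≤ ∫⁻ ti, (G y).indicator (fun _ => (1:ℝ≥0∞)) tj
              * (F (update y j tj)).indicator (fun _ => (1:ℝ≥0∞)) ti ∂μ := by
            apply lintegral_mono
            intro ti
            simp only []
            by_cases hmem : update (update y j tj) i ti ∈ T
            · have h1 : ti ∈ F (update y j tj) := by
                have h := hmem.1
                rwa [update_self, hF] at h
              have h2 : tj ∈ G y := by
                have h := hmem.2
                rw [update_of_ne hji.symm, update_self] at h
                rwa [hG _ i hij.le ti, hG _ j le_rfl tj] at h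
              rw [hfdef]
              rw [Set.indicator_of_mem hmem, Set.indicator_of_mem h1, Set.indicator_of_mem h2,
                one_mul]
            · rw [hfdef, Set.indicator_of_notMem hmem]
              exact zero_le
        _ = (G y).indicator (fun _ => (1:ℝ≥0∞)) tj * μ (F (update y j tj)) := by
            rw [lintegral_const_mul _ (measurable_of_countable _), hone2,
              lintegral_indicator_one ((Set.to_countable _).measurableSet)]
        _ ≤ (G y).indicator (fun _ => (1:ℝ≥0∞)) tj * ε := mul_le_mul_right (hFε _) _
    calc ∫⁻ tj, (∫⋯∫⁻_{i}, f ∂fun _ => μ) (update y j tj) ∂μ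
        ≤ ∫⁻ tj, (G y).indicator (fun _ => (1:ℝ≥0∞)) tj * ε ∂μ := lintegral_mono step1
      _ = μ (G y) * ε := by
          rw [lintegral_mul_const _ (measurable_of_countable _), hone2,
            lintegral_indicator_one ((Set.to_countable _).measurableSet)]
      _ ≤ ε * ε := mul_le_mul_left (hGε _) _
      _ = ε ^ 2 := (sq ε).symm
  calc (∫⋯∫⁻_Finset.univ \ {i, j}, (∫⋯∫⁻_{i, j}, f ∂fun _ => μ)
        ∂fun _ => μ) (fun _ => t₀)
      ≤ (∫⋯∫⁻_Finset.univ \ {i, j}, (fun _ => ε ^ 2) ∂fun _ => μ) (fun _ => t₀) :=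
        MeasureTheory.lmarginal_mono (fun y => inner y) _
    _ = ε ^ 2 := by rw [lmarginal_const']

lemma sum_facts {x : ℕ → ℕ} {n : ℕ} (hsum : (∑' i : ℕ, (x i : ℝ≥0∞)) = n) :
    ∃ M : ℕ, (∀ i, M ≤ i → x i = 0) ∧ (∀ K, M ≤ K → ∑ i ∈ Finset.range K, x i = n) := by
  have hfin : {i | x i ≠ 0}.Finite := by
    by_contra hinf
    replace hinf : {i | x i ≠ 0}.Infinite := hinf
    obtain ⟨t, hts, htc⟩ := hinf.exists_subset_card_eq (n+1)
    have h1 : (((n+1 : ℕ)) : ℝ≥0∞) ≤ ∑ i ∈ t, (x i : ℝ≥0∞) := by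
      calc (((n+1 : ℕ)) : ℝ≥0∞) = ∑ _i ∈ t, 1 := by
            rw [Finset.sum_const, htc]; simp
        _ ≤ ∑ i ∈ t, (x i : ℝ≥0∞) := by
            apply Finset.sum_le_sum
            intro i hi
            have hxi : x i ≠ 0 := hts hi
            have : 1 ≤ x i := Nat.one_le_iff_ne_zero.mpr hxi
            exact_mod_cast this
    have h2 : ∑ i ∈ t, (x i : ℝ≥0∞) ≤ ∑' i, (x i : ℝ≥0∞) := ENNReal.sum_le_tsum t
    rw [hsum] at h2
    have h3 : ((n+1 : ℕ) : ℝ≥0∞) ≤ (n : ℝ≥0∞) := le_trans h1 h2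
    have h4 : (n+1 : ℕ) ≤ n := by exact_mod_cast h3
    omega
  set M := hfin.toFinset.sup id + 1 with hM
  have hzero : ∀ i, M ≤ i → x i = 0 := by
    intro i hi
    by_contra hxi
    have hmem : i ∈ hfin.toFinset := by simp [hxi]
    have : i ≤ hfin.toFinset.sup id := Finset.le_sup (f := id) hmem
    omega
  refine ⟨M, hzero, ?_⟩
  intro K hK
  have heq : (∑' i : ℕ, (x i : ℝ≥0∞)) = ∑ i ∈ Finset.range K, (x i : ℝ≥0∞) := by
    apply tsum_eq_sum
    intro i hi
    have hMi : M ≤ i := le_trans hK (le_of_not_gt (fun h => hi (Finset.mem_range.mpr h)))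
    simp [hzero i hMi]
  rw [heq] at hsum
  have hfin : ((∑ i ∈ Finset.range K, x i : ℕ) : ℝ≥0∞) = (n : ℝ≥0∞) := by
    push_cast
    exact hsum
  exact_mod_cast hfin

lemma x_le {x : ℕ → ℕ} {n : ℕ} (hsum : (∑' i : ℕ, (x i : ℝ≥0∞)) = n) (i : ℕ) : x i ≤ n := by
  obtain ⟨M, hM0, hMs⟩ := sum_facts hsum
  have h := hMs (max M (i+1)) (le_max_left _ _)
  calc x i ≤ ∑ j ∈ Finset.range (max M (i+1)), x j :=
        Finset.single_le_sum (fun j _ => Nat.zero_le _)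
          (Finset.mem_range.mpr (lt_of_lt_of_le (Nat.lt_succ_self i) (le_max_right _ _)))
    _ = n := h

lemma two_bad {N n : ℕ} (hNn : n < N) {x : ℕ → ℕ} (hx0 : x 0 = 0)
    (hsum : (∑' i : ℕ, (x i : ℝ≥0∞)) = n) (ξ : Fin (x 1) → ℕ × Fin N)
    (hξ : ∀ b, 1 ≤ (ξ b).1) (hm : ballsAfter N x (l := x 1) ξ + 2 ≤ n) :
    ∃ b b' : Fin (x 1), b ≠ b' ∧
      (((ξ b).2 : ℕ) < n ∨ ∃ c, c < b ∧ (ξ c).2 = (ξ b).2) ∧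
      (((ξ b').2 : ℕ) < n ∨ ∃ c, c < b' ∧ (ξ c).2 = (ξ b').2) := by
  classical
  obtain ⟨M, hM0, hMs⟩ := sum_facts hsum
  have hxle : ∀ i, x i ≤ n := x_le hsum
  -- the fixed balls
  have hattach : ∀ j : ℕ, ∀ m ∈ Finset.range (x (j+1)), m < N := by
    intro j m hm'
    exact lt_of_lt_of_le (Finset.mem_range.mp hm') (le_trans (hxle (j+1)) hNn.le)
  set Fx : Finset (ℕ × Fin N) :=
    (Finset.Ico 1 (M+1)).biUnion
      (fun j => ({j} : Finset ℕ) ×ˢ ((Finset.range (x (j+1))).attachFin (hattach j))) with hFx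
  have hFxmem : ∀ q : ℕ × Fin N, q ∈ Fx ↔ 1 ≤ q.1 ∧ q.1 < M+1 ∧ (q.2 : ℕ) < x (q.1+1) := by
    intro q
    simp only [hFx, Finset.mem_biUnion, Finset.mem_Ico, Finset.mem_product, Finset.mem_singleton,
      Finset.mem_attachFin, Finset.mem_range]
    constructor
    · rintro ⟨j, ⟨hj1, hj2⟩, rfl, hq2⟩
      exact ⟨hj1, hj2, hq2⟩
    · rintro ⟨h1, h2, h3⟩
      exact ⟨q.1, ⟨h1, h2⟩, rfl, h3⟩
  have hFxcard : Fx.card = ∑ j ∈ Finset.Ico 1 (M+1), x (j+1) := by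
    rw [hFx, Finset.card_biUnion]
    · apply Finset.sum_congr rfl
      intro j _
      rw [Finset.card_product, Finset.card_singleton, Finset.card_attachFin,
        Finset.card_range, one_mul]
    · intro a _ b _ hab
      simp only [Finset.disjoint_left]
      intro q hq hq'
      simp only [Finset.mem_product, Finset.mem_singleton] at hq hq'
      exact hab (hq.1.symm.trans hq'.1)
  have hcardn : Fx.card + x 1 = n := by
    have hrange : ∑ i ∈ Finset.range (M+2), x i = n := hMs (M+2) (by omega)
    have hsplit : (Finset.range (M+2)) = insert 0 (insert 1 (Finset.Ico 2 (M+2))) := by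
      ext i
      simp only [Finset.mem_range, Finset.mem_insert, Finset.mem_Ico]
      omega
    rw [hsplit] at hrange
    rw [Finset.sum_insert (by simp), Finset.sum_insert (by simp)] at hrange
    have hshift : ∑ j ∈ Finset.Ico 1 (M+1), x (j+1) = ∑ i ∈ Finset.Ico 2 (M+2), x i := by
      rw [Finset.sum_Ico_eq_sum_range, Finset.sum_Ico_eq_sum_range]
      simp only [Nat.add_sub_cancel]
      apply Finset.sum_congr rfl
      intro i _
      congr 1
      omega
    rw [hFxcard, hshift, ← hrange, hx0]
    omega
  -- bad/good indices
  set bad : Fin (x 1) → Prop :=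
    fun b => (((ξ b).2 : ℕ) < n ∨ ∃ c, c < b ∧ (ξ c).2 = (ξ b).2) with hbad
  set goodF : Finset (Fin (x 1)) := Finset.univ.filter (fun b => ¬ bad b) with hgoodF
  set badF : Finset (Fin (x 1)) := Finset.univ.filter bad with hbadF
  have hpart : badF.card + goodF.card = x 1 := by
    rw [hbadF, hgoodF, Finset.card_filter_add_card_filter_not]
    simp
  set Img : Finset (ℕ × Fin N) := goodF.image ξ with hImg
  have hinj : Set.InjOn ξ ↑goodF := by
    intro b hb c hc hbc
    by_contra hne
    rcases lt_or_gt_of_ne hne with h | h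
    · have : bad c := Or.inr ⟨b, h, congrArg Prod.snd hbc⟩
      simp only [hgoodF, Finset.coe_filter, Set.mem_setOf_eq] at hc
      exact hc.2 this
    · have : bad b := Or.inr ⟨c, h, congrArg Prod.snd hbc.symm⟩
      simp only [hgoodF, Finset.coe_filter, Set.mem_setOf_eq] at hb
      exact hb.2 this
  have hImgcard : Img.card = goodF.card := Finset.card_image_of_injOn hinj
  have hdisj : Disjoint Fx Img := by
    rw [Finset.disjoint_left]
    intro q hq hq'
    obtain ⟨b, hb, rfl⟩ := Finset.mem_image.mp hq'
    have hbgood : ¬ bad b := by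
      simp only [hgoodF, Finset.mem_filter] at hb
      exact hb.2
    have h1 : ((ξ b).2 : ℕ) < x ((ξ b).1 + 1) := ((hFxmem _).mp hq).2.2
    exact hbgood (Or.inl (lt_of_lt_of_le h1 (hxle _)))
  set S : Set (ℕ × Fin N) :=
    {q : ℕ × Fin N | 1 ≤ q.1 ∧ (((q.2 : ℕ) < x (q.1 + 1)) ∨ ∃ b : Fin (x 1), ξ b = q)} with hS
  have hsub : ↑(Fx ∪ Img) ⊆ S := by
    intro q hq
    rcases Finset.mem_union.mp hq with h | h
    · obtain ⟨h1, _, h3⟩ := (hFxmem q).mp h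
      exact ⟨h1, Or.inl h3⟩
    · obtain ⟨b, _, rfl⟩ := Finset.mem_image.mp h
      exact ⟨hξ b, Or.inr ⟨b, rfl⟩⟩
  have hSfin : S.Finite := by
    apply Set.Finite.subset (Set.Finite.union Fx.finite_toSet (Set.finite_range ξ))
    intro q hq
    obtain ⟨h1, h2⟩ := hq
    rcases h2 with h | h
    · left
      have hne : x (q.1 + 1) ≠ 0 := fun hz => by omega
      have : q.1 + 1 < M := by
        by_contra hge
        exact hne (hM0 _ (by omega))
      exact (hFxmem q).mpr ⟨h1, by omega, h⟩
    · right
      obtain ⟨b, rfl⟩ := h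
      exact Set.mem_range_self b
  have hineq : Fx.card + goodF.card ≤ S.ncard := by
    have h1 : (↑(Fx ∪ Img) : Set (ℕ × Fin N)).ncard ≤ S.ncard :=
      Set.ncard_le_ncard hsub hSfin
    rw [Set.ncard_coe_finset, Finset.card_union_of_disjoint hdisj, hImgcard] at h1
    exact h1
  have hball : ballsAfter N x (l := x 1) ξ = S.ncard := rfl
  rw [hball] at hm
  have h2bad : 1 < badF.card := by omega
  obtain ⟨b, hb, b', hb', hne⟩ := Finset.one_lt_card.mp h2bad
  refine ⟨b, b', hne, ?_, ?_⟩
  · exact (Finset.mem_filter.mp hb).2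
  · exact (Finset.mem_filter.mp hb').2


lemma unif_bound {N l : ℕ} (n : ℕ) (σ : Fin l → Fin N) (b : Fin l) :
    unifFin N {t : Fin N | (t : ℕ) < n ∨ ∃ c, c < b ∧ σ c = t}
      ≤ ((n + l : ℕ) : ℝ≥0∞) * ((N : ℝ≥0∞))⁻¹ := by
  classical
  set s : Finset (Fin N) :=
    (Finset.univ.filter fun t : Fin N => (t : ℕ) < n) ∪ Finset.univ.image σ with hs
  have hsub : {t : Fin N | (t : ℕ) < n ∨ ∃ c, c < b ∧ σ c = t} ⊆ ↑s := by
    intro t ht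
    rcases ht with h | ⟨c, _, rfl⟩
    · exact Finset.mem_coe.mpr (Finset.mem_union_left _ (by simp [h]))
    · exact Finset.mem_coe.mpr (Finset.mem_union_right _ (Finset.mem_image_of_mem σ (by simp)))
  calc unifFin N {t : Fin N | (t : ℕ) < n ∨ ∃ c, c < b ∧ σ c = t}
      ≤ unifFin N ↑s := measure_mono hsub
    _ = (N : ℝ≥0∞)⁻¹ * s.card := unifFin_finset N s
    _ ≤ (N : ℝ≥0∞)⁻¹ * ((n + l : ℕ) : ℝ≥0∞) := by
        apply mul_le_mul_right
        have hcard : s.card ≤ n + l := by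
          calc s.card ≤ (Finset.univ.filter fun t : Fin N => (t : ℕ) < n).card
                + (Finset.univ.image σ).card := Finset.card_union_le _ _
            _ ≤ n + l := by
                apply Nat.add_le_add
                · have := Finset.card_le_card_of_injOn
                    (s := Finset.univ.filter fun t : Fin N => (t : ℕ) < n)
                    (t := Finset.range n) (fun t : Fin N => (t : ℕ))
                    (fun t ht => Finset.mem_range.mpr (Finset.mem_filter.mp ht).2)
                    (Fin.val_injective.injOn)
                  simpa using this
                · calc (Finset.univ.image σ).card ≤ (Finset.univ : Finset (Fin l)).card :=
                      Finset.card_image_le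
                    _ = l := by simp
        calc (s.card : ℝ≥0∞) ≤ ((n + l : ℕ) : ℝ≥0∞) := by exact_mod_cast hcard
          _ = _ := by rfl
    _ = _ := mul_comm _ _

lemma F_update {l N : ℕ} (n : ℕ) (σ : Fin l → Fin N) (b k : Fin l) (hk : b ≤ k) (t : Fin N) :
    {t' : Fin N | (t' : ℕ) < n ∨ ∃ c, c < b ∧ update σ k t c = t'}
      = {t' : Fin N | (t' : ℕ) < n ∨ ∃ c, c < b ∧ σ c = t'} := by
  ext t'
  simp only [Set.mem_setOf_eq]
  apply or_congr Iff.rfl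
  constructor
  · rintro ⟨c, hc, hct⟩
    exact ⟨c, hc, by rwa [update_of_ne (ne_of_lt (lt_of_lt_of_le hc hk))] at hct⟩
  · rintro ⟨c, hc, hct⟩
    exact ⟨c, hc, by rwa [update_of_ne (ne_of_lt (lt_of_lt_of_le hc hk))]⟩

lemma pair_event_bound {l N : ℕ} (n : ℕ) (hN : 0 < N) {i j : Fin l} (hij : j < i) :
    Measure.pi (fun _ : Fin l => unifFin N)
      {σ : Fin l → Fin N |
        (((σ i : ℕ) < n ∨ ∃ c, c < i ∧ σ c = σ i) ∧ ((σ j : ℕ) < n ∨ ∃ c, c < j ∧ σ c = σ j))}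
      ≤ (((n + l : ℕ) : ℝ≥0∞) * (N : ℝ≥0∞)⁻¹) ^ 2 := by
  haveI := unifFin_prob N hN
  exact pair_bound (unifFin N) hij
    (fun σ => {t : Fin N | (t : ℕ) < n ∨ ∃ c, c < i ∧ σ c = t})
    (fun σ => {t : Fin N | (t : ℕ) < n ∨ ∃ c, c < j ∧ σ c = t})
    (fun σ t => F_update n σ i i le_rfl t)
    (fun σ k hk t => F_update n σ j k hk t)
    (fun σ => unif_bound n σ i) (fun σ => unif_bound n σ j)

end Aux

/-- for every `n` there is `c(n) < ∞`, depending only on `n`, such that for all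
`N > n` and every configuration `x ∈ S_n`, the probability of at least two mergers in one step
of the seed-bank ancestral dynamics is at most `c(n)/N²`. -/
theorem one_step_multiple_merger_probability
    (w : ℕ → ℝ) (hw0 : w 0 = 0) (hwnn : ∀ k, 0 ≤ w k) (hwsum : HasSum w 1) (hw1 : 0 < w 1) :
    ∀ n : ℕ, ∃ c : ℝ, ∀ N : ℕ, n < N → ∀ x : ℕ → ℕ, x 0 = 0 →
      (∑' i : ℕ, (x i : ℝ≥0∞)) = n →
      ((Measure.pi (fun _ : Fin (x 1) => (measureOfWeights w).prod (unifFin N)))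
            {ξ | ballsAfter N x ξ + 2 ≤ n}).toReal
        ≤ c / (N : ℝ) ^ 2 := by
  intro n
  refine ⟨4 * (n : ℝ) ^ 4, ?_⟩
  intro N hNn x hx0 hsum
  have hN : 0 < N := lt_of_le_of_lt (Nat.zero_le n) hNn
  haveI hwprob : IsProbabilityMeasure (measureOfWeights w) :=
    ⟨measureOfWeights_univ w hwnn hwsum⟩
  haveI := unifFin_prob N hN
  have hl : x 1 ≤ n := x_le hsum 1
  set ν : Measure (ℕ × Fin N) := (measureOfWeights w).prod (unifFin N) with hν
  set P : Measure (Fin (x 1) → ℕ × Fin N) := Measure.pi (fun _ => ν) with hP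
  set Φ : (Fin (x 1) → ℕ × Fin N) → (Fin (x 1) → Fin N) := fun ξ b => (ξ b).2 with hΦ
  have hΦpres : MeasurePreserving Φ P (Measure.pi (fun _ : Fin (x 1) => unifFin N)) := by
    apply MeasureTheory.measurePreserving_pi
    intro _
    refine ⟨measurable_snd, ?_⟩
    rw [hν, Measure.map_snd_prod, measure_univ, one_smul]
  -- the bad events
  set Bad : Fin (x 1) → Set (Fin (x 1) → Fin N) :=
    fun b => {σ | (σ b : ℕ) < n ∨ ∃ c, c < b ∧ σ c = σ b} with hBad
  -- inclusion
  have hincl : {ξ : Fin (x 1) → ℕ × Fin N | ballsAfter N x (l := x 1) ξ + 2 ≤ n} ⊆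
      (⋃ b : Fin (x 1), {ξ : Fin (x 1) → ℕ × Fin N | (ξ b).1 = 0}) ∪
      (⋃ p : Fin (x 1) × Fin (x 1), ⋃ (_ : p.2 < p.1), Φ ⁻¹' (Bad p.1 ∩ Bad p.2)) := by
    intro ξ hξ
    by_cases hz : ∃ b, (ξ b).1 = 0
    · exact Or.inl (Set.mem_iUnion.mpr hz)
    · push_neg at hz
      have hξ1 : ∀ b, 1 ≤ (ξ b).1 := fun b => Nat.one_le_iff_ne_zero.mpr (hz b)
      obtain ⟨b, b', hne, hb, hb'⟩ := two_bad hNn hx0 hsum ξ hξ1 hξ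
      right
      rcases lt_or_gt_of_ne hne with h | h
      · exact Set.mem_iUnion.mpr ⟨(b', b), Set.mem_iUnion.mpr ⟨h, hb', hb⟩⟩
      · exact Set.mem_iUnion.mpr ⟨(b, b'), Set.mem_iUnion.mpr ⟨h, hb, hb'⟩⟩
  -- measure bounds
  have hzero : P (⋃ b : Fin (x 1), {ξ : Fin (x 1) → ℕ × Fin N | (ξ b).1 = 0}) = 0 := by
    apply le_antisymm _ (zero_le)
    calc P (⋃ b : Fin (x 1), {ξ : Fin (x 1) → ℕ × Fin N | (ξ b).1 = 0})
        ≤ ∑' b : Fin (x 1), P {ξ : Fin (x 1) → ℕ × Fin N | (ξ b).1 = 0} := measure_iUnion_le _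
      _ = 0 := by
          have hone : ∀ b : Fin (x 1), P {ξ : Fin (x 1) → ℕ × Fin N | (ξ b).1 = 0} = 0 := by
            intro b
            have hset : {ξ : Fin (x 1) → ℕ × Fin N | (ξ b).1 = 0}
                = (Function.eval b) ⁻¹' {q : ℕ × Fin N | q.1 = 0} := rfl
            rw [hset, hP]
            apply MeasureTheory.Measure.pi_eval_preimage_null
            have hprod : {q : ℕ × Fin N | q.1 = 0} = ({0} : Set ℕ) ×ˢ (Set.univ : Set (Fin N)) := by
              ext q
              simp only [Set.mem_setOf_eq, Set.mem_prod, Set.mem_singleton_iff, Set.mem_univ,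
                and_true]
            rw [hν, hprod, Measure.prod_prod, measureOfWeights_singleton, hw0]
            simp
          simp only [hone]
          exact tsum_zero
  have hpair : ∀ p : Fin (x 1) × Fin (x 1),
      P (⋃ (_ : p.2 < p.1), Φ ⁻¹' (Bad p.1 ∩ Bad p.2))
        ≤ (((n + x 1 : ℕ) : ℝ≥0∞) * (N : ℝ≥0∞)⁻¹) ^ 2 := by
    intro p
    by_cases h : p.2 < p.1
    · calc P (⋃ (_ : p.2 < p.1), Φ ⁻¹' (Bad p.1 ∩ Bad p.2))
          ≤ P (Φ ⁻¹' (Bad p.1 ∩ Bad p.2)) :=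
            measure_mono (Set.iUnion_subset fun _ => subset_rfl)
        _ = Measure.pi (fun _ : Fin (x 1) => unifFin N) (Bad p.1 ∩ Bad p.2) :=
            hΦpres.measure_preimage ((Set.to_countable _).measurableSet.nullMeasurableSet)
        _ ≤ _ := pair_event_bound n hN h
    · simp [h]
  have hmain : P {ξ : Fin (x 1) → ℕ × Fin N | ballsAfter N x (l := x 1) ξ + 2 ≤ n}
      ≤ ((x 1 * x 1 : ℕ) : ℝ≥0∞) * ((((n + x 1 : ℕ)) : ℝ≥0∞) * (N : ℝ≥0∞)⁻¹) ^ 2 := by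
    calc P {ξ : Fin (x 1) → ℕ × Fin N | ballsAfter N x (l := x 1) ξ + 2 ≤ n}
        ≤ P ((⋃ b : Fin (x 1), {ξ : Fin (x 1) → ℕ × Fin N | (ξ b).1 = 0}) ∪
            (⋃ p : Fin (x 1) × Fin (x 1), ⋃ (_ : p.2 < p.1), Φ ⁻¹' (Bad p.1 ∩ Bad p.2))) :=
          measure_mono hincl
      _ ≤ P (⋃ b : Fin (x 1), {ξ : Fin (x 1) → ℕ × Fin N | (ξ b).1 = 0}) +
          P (⋃ p : Fin (x 1) × Fin (x 1), ⋃ (_ : p.2 < p.1), Φ ⁻¹' (Bad p.1 ∩ Bad p.2)) :=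
          measure_union_le _ _
      _ = P (⋃ p : Fin (x 1) × Fin (x 1), ⋃ (_ : p.2 < p.1), Φ ⁻¹' (Bad p.1 ∩ Bad p.2)) := by
          rw [hzero, zero_add]
      _ ≤ ∑' p : Fin (x 1) × Fin (x 1), P (⋃ (_ : p.2 < p.1), Φ ⁻¹' (Bad p.1 ∩ Bad p.2)) :=
          measure_iUnion_le _
      _ ≤ ∑' _p : Fin (x 1) × Fin (x 1), (((n + x 1 : ℕ) : ℝ≥0∞) * (N : ℝ≥0∞)⁻¹) ^ 2 :=
          ENNReal.tsum_le_tsum hpair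
      _ = ((x 1 * x 1 : ℕ) : ℝ≥0∞) * ((((n + x 1 : ℕ)) : ℝ≥0∞) * (N : ℝ≥0∞)⁻¹) ^ 2 := by
          rw [tsum_fintype, Finset.sum_const, Finset.card_univ, Fintype.card_prod,
            Fintype.card_fin, nsmul_eq_mul]
  have hnum : ((x 1 * x 1 : ℕ) : ℝ≥0∞) * ((((n + x 1 : ℕ)) : ℝ≥0∞) * (N : ℝ≥0∞)⁻¹) ^ 2
      ≤ ((4 * n ^ 4 : ℕ) : ℝ≥0∞) * ((N : ℝ≥0∞) ^ 2)⁻¹ := by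
    rw [mul_pow, ← ENNReal.inv_pow, ← mul_assoc]
    apply mul_le_mul' ?_ le_rfl
    have h1 : (x 1 * x 1) * (n + x 1) ^ 2 ≤ 4 * n ^ 4 := by
      have h2 : (x 1 * x 1) * (n + x 1) ^ 2 ≤ (n * n) * ((2 * n) ^ 2) :=
        Nat.mul_le_mul (Nat.mul_le_mul hl hl) (Nat.pow_le_pow_left (by omega) 2)
      have h3 : (n * n) * ((2 * n) ^ 2) = 4 * n ^ 4 := by ring
      omega
    calc ((x 1 * x 1 : ℕ) : ℝ≥0∞) * (((n + x 1 : ℕ)) : ℝ≥0∞) ^ 2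
        = (((x 1 * x 1) * (n + x 1) ^ 2 : ℕ) : ℝ≥0∞) := by push_cast; ring
      _ ≤ ((4 * n ^ 4 : ℕ) : ℝ≥0∞) := by exact_mod_cast h1
  have hNne : ((N : ℝ≥0∞) ^ 2)⁻¹ ≠ ⊤ := by
    rw [ENNReal.inv_ne_top]
    apply pow_ne_zero
    exact_mod_cast hN.ne'
  have hfin : ((4 * n ^ 4 : ℕ) : ℝ≥0∞) * ((N : ℝ≥0∞) ^ 2)⁻¹ ≠ ⊤ :=
    ENNReal.mul_ne_top (ENNReal.natCast_ne_top _) hNne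
  calc (P {ξ : Fin (x 1) → ℕ × Fin N | ballsAfter N x (l := x 1) ξ + 2 ≤ n}).toReal
      ≤ (((4 * n ^ 4 : ℕ) : ℝ≥0∞) * ((N : ℝ≥0∞) ^ 2)⁻¹).toReal :=
        ENNReal.toReal_mono hfin (le_trans hmain hnum)
    _ = 4 * (n : ℝ) ^ 4 / (N : ℝ) ^ 2 := by
        rw [ENNReal.toReal_mul, ENNReal.toReal_inv, ENNReal.toReal_pow, ENNReal.toReal_natCast,
          ENNReal.toReal_natCast]
        push_cast
        ring
end
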